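/- If β·(K₀+F)/(1 + h·(K₀+F)) > δ + γ, then the Jacobian of the crop–pest system at (K₀+F, 0) has a positive eigenvalue, so the pest-extinction equilibrium is unstable. -/
import Mathlib


noncomputable def F2 (β δ γ h x y : ℝ) : ℝ :=
  β * x * y / (1 + h * x) - (δ + γ) * y

theorem jacobian_pest_extinction_unstable
    (r K0 F α β δ γ h : ℝ)
    (hr : 0 < r) (hK0 : 0 < K0) (hF : 0 < F) (hα : 0 < α)
    (hβ : 0 < β) (hδ : 0 < δ) (hγ : 0 < γ) (hh : 0 < h)
    (hcond : β * (K0 + F) / (1 + h * (K0 + F)) > δ + γ) :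
    HasDerivAt (fun y => F2 β δ γ h (K0 + F) y)
      (β * (K0 + F) / (1 + h * (K0 + F)) - (γ + δ)) 0 ∧
    0 < β * (K0 + F) / (1 + h * (K0 + F)) - (γ + δ) := by
  constructor
  · have h1 : (fun y => F2 β δ γ h (K0 + F) y)
      = fun y => (β * (K0 + F) / (1 + h * (K0 + F)) - (γ + δ)) * y := by
      funext y
      simp only [F2]
      ring
    rw [h1]
    simpa using (hasDerivAt_id (0:ℝ)).const_mul
      (β * (K0 + F) / (1 + h * (K0 + F)) - (γ + δ))
  · linarith
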